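/- Let n ≥ 3, let C be the n×n real circulant matrix with entries C_{i,i+1 mod n} = C_{i,i−1 mod n} = 1/2 and all other entries 0, let I be the n×n identity, let 𝟙 ∈ ℝⁿ be the all-ones vector, and let b ∈ ℝⁿ be the vector with b_1 = −π, b_n = π and all other entries 0. Let ω* ∈ ℝ, k_φ > 0, and let φ : ℝ → ℝⁿ be differentiable with φ'(t) = ω*·𝟙 + k_φ((C − I)φ(t) + b) for all t. Then the phase error e_φ(t) := (C − I)φ(t) + b converges to 0 as t → ∞, and consequently φ'(t) converges to ω*·𝟙; i.e. each phase derivative φᵢ'(t) tends to ω* and each phase φᵢ(t) tends to the average of its neighbors' phases (as encoded by e_φ → 0). -/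

import Mathlib

open Matrix Finset Filter

/-- The `n × n` circulant matrix with first row `(0, 1/2, 0, …, 0, 1/2)`. -/
noncomputable def ringC (n : ℕ) : Matrix (Fin n) (Fin n) ℝ :=
  Matrix.of fun i j =>
    if ((i : ℕ) + 1) % n = (j : ℕ) ∨ ((j : ℕ) + 1) % n = (i : ℕ) then (1 : ℝ) / 2 else 0

/-- The vector `b = (-π, 0, …, 0, π)ᵀ`. -/
noncomputable def vecB (n : ℕ) : Fin n → ℝ := fun i =>
  if (i : ℕ) = 0 then -Real.pi else if (i : ℕ) = n - 1 then Real.pi else 0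

section helpers
variable {n : ℕ} [NeZero n]

lemma fin_one_val (hn : 3 ≤ n) : ((1 : Fin n) : ℕ) = 1 := by
  rw [Fin.val_one']; exact Nat.mod_eq_of_lt (by omega)

lemma fin_add_one_val (hn : 3 ≤ n) (i : Fin n) :
    ((i + 1 : Fin n) : ℕ) = ((i : ℕ) + 1) % n := by
  rw [Fin.val_add, fin_one_val hn]

lemma cond_iff₁ (hn : 3 ≤ n) (i j : Fin n) :
    (((i : ℕ) + 1) % n = (j : ℕ)) ↔ j = i + 1 := by
  rw [Fin.ext_iff, fin_add_one_val hn]; exact eq_comm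

lemma cond_iff₂ (hn : 3 ≤ n) (i j : Fin n) :
    (((j : ℕ) + 1) % n = (i : ℕ)) ↔ j = i - 1 := by
  rw [eq_sub_iff_add_eq, Fin.ext_iff, fin_add_one_val hn]

lemma sub_one_iff (i j : Fin n) : (j = i - 1) ↔ (i = j + 1) := by
  rw [eq_sub_iff_add_eq, eq_comm]

lemma ne_add_sub (hn : 3 ≤ n) (i : Fin n) : i + 1 ≠ i - 1 := by
  intro h
  have h2 : i + 1 + 1 = i := by rw [h]; exact sub_add_cancel i 1
  have h3 : ((i + 1 + 1 : Fin n) : ℕ) = (i : ℕ) := congrArg Fin.val h2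
  rw [fin_add_one_val hn, fin_add_one_val hn] at h3
  have hi := i.isLt
  rcases Nat.lt_or_ge ((i : ℕ) + 1) n with hlt | hge
  · rw [Nat.mod_eq_of_lt hlt] at h3
    rcases Nat.lt_or_ge ((i : ℕ) + 1 + 1) n with hlt2 | hge2
    · rw [Nat.mod_eq_of_lt hlt2] at h3; omega
    · rw [Nat.mod_eq_sub_mod hge2, Nat.mod_eq_of_lt (by omega)] at h3; omega
  · have hieq : (i : ℕ) + 1 = n := by omega
    rw [hieq, Nat.mod_self, Nat.mod_eq_of_lt (by omega)] at h3; omega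

lemma ringC_apply (hn : 3 ≤ n) (i j : Fin n) :
    ringC n i j
      = (if j = i + 1 then (1:ℝ)/2 else 0) + (if j = i - 1 then (1:ℝ)/2 else 0) := by
  show (if ((i : ℕ) + 1) % n = (j : ℕ) ∨ ((j : ℕ) + 1) % n = (i : ℕ) then (1 : ℝ) / 2 else 0) = _
  simp only [cond_iff₁ hn, cond_iff₂ hn, sub_one_iff]
  by_cases h1 : j = i + 1 <;> by_cases h2 : i = j + 1
  · exact absurd ((sub_one_iff i j).mpr h2) (h1 ▸ ne_add_sub hn i)
  · rw [if_pos (Or.inl h1), if_pos h1, if_neg h2, add_zero]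
  · rw [if_pos (Or.inr h2), if_neg h1, if_pos h2, zero_add]
  · rw [if_neg (by simp [h1, h2]), if_neg h1, if_neg h2, add_zero]

lemma ringC_mulVec (hn : 3 ≤ n) (x : Fin n → ℝ) (i : Fin n) :
    (ringC n *ᵥ x) i = (x (i + 1) + x (i - 1)) / 2 := by
  show ∑ j, ringC n i j * x j = _
  simp only [ringC_apply hn, add_mul, ite_mul, zero_mul]
  rw [Finset.sum_add_distrib]
  simp [Finset.sum_ite_eq']; ring

lemma sub_one_mulVec (hn : 3 ≤ n) (x : Fin n → ℝ) (i : Fin n) :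
    ((ringC n - 1) *ᵥ x) i = (x (i + 1) + x (i - 1)) / 2 - x i := by
  rw [Matrix.sub_mulVec, Pi.sub_apply, ringC_mulVec hn, Matrix.one_mulVec]

lemma ringC_mulVec_one (hn : 3 ≤ n) :
    (ringC n - 1) *ᵥ (fun _ => (1:ℝ)) = 0 := by
  funext i; rw [sub_one_mulVec hn]; norm_num

end helpers

section sums
variable {n : ℕ} [NeZero n]

lemma sum_shift (x : Fin n → ℝ) : ∑ i : Fin n, x (i + 1) = ∑ i, x i :=
  Fintype.sum_equiv (Equiv.addRight 1) _ _ (fun _ => rfl)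

lemma sum_shift' (x : Fin n → ℝ) : ∑ i : Fin n, x (i - 1) = ∑ i, x i :=
  Fintype.sum_equiv (Equiv.subRight 1) _ _ (fun _ => rfl)

lemma sum_vecB (hn : 3 ≤ n) : ∑ i, vecB n i = 0 := by
  have key : ∀ i : Fin n, vecB n i =
      (if i = (0 : Fin n) then -Real.pi else 0)
        + (if i = (⟨n - 1, by omega⟩ : Fin n) then Real.pi else 0) := by
    intro i
    show (if (i : ℕ) = 0 then -Real.pi else if (i : ℕ) = n - 1 then Real.pi else 0) = _
    by_cases h0 : (i : ℕ) = 0 <;> by_cases h1 : (i : ℕ) = n - 1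
    · omega
    · rw [if_pos h0, if_pos (Fin.ext h0), if_neg (by simp [Fin.ext_iff, h1]), add_zero]
    · rw [if_neg h0, if_pos h1, if_neg (by simp [Fin.ext_iff, h0]),
        if_pos (Fin.ext h1), zero_add]
    · rw [if_neg h0, if_neg h1, if_neg (by simp [Fin.ext_iff, h0]),
        if_neg (by simp [Fin.ext_iff, h1]), add_zero]
  rw [Finset.sum_congr rfl (fun i _ => key i), Finset.sum_add_distrib]
  simp [Finset.sum_ite_eq']

lemma sum_err (hn : 3 ≤ n) (x : Fin n → ℝ) :
    ∑ i, (((ringC n - 1) *ᵥ x) i + vecB n i) = 0 := by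
  simp only [sub_one_mulVec hn]
  rw [Finset.sum_add_distrib, sum_vecB hn, add_zero, Finset.sum_sub_distrib]
  have : ∑ i : Fin n, (x (i + 1) + x (i - 1)) / 2 = ∑ i, x i := by
    rw [← Finset.sum_div, Finset.sum_add_distrib, sum_shift, sum_shift']; ring
  rw [this, sub_self]

lemma quad_eq (hn : 3 ≤ n) (x : Fin n → ℝ) :
    ∑ i, x i * ((ringC n - 1) *ᵥ x) i
      = -(1/2) * ∑ i, (x i - x (i + 1))^2 := by
  have expand : ∀ i : Fin n, x i * ((ringC n - 1) *ᵥ x) i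
      = x i * x (i + 1) / 2 + x i * x (i - 1) / 2 - x i ^ 2 := by
    intro i; rw [sub_one_mulVec hn]; ring
  rw [Finset.sum_congr rfl (fun i _ => expand i)]
  have h1 : ∑ i : Fin n, x (i + 1) ^ 2 = ∑ i, x i ^ 2 := sum_shift (fun i => x i ^ 2)
  have h2 : ∑ i : Fin n, x i * x (i - 1) = ∑ i, x (i + 1) * x i := by
    rw [← sum_shift (fun i => x i * x (i - 1))]
    exact Finset.sum_congr rfl (fun i _ => by rw [add_sub_cancel_right])
  have h3 : ∑ i : Fin n, x (i + 1) * x i = ∑ i, x i * x (i + 1) :=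
    Finset.sum_congr rfl (fun i _ => mul_comm _ _)
  have h4 : ∑ i : Fin n, (x i - x (i + 1))^2
      = ∑ i, (x i ^ 2 + x (i + 1) ^ 2 - 2 * (x i * x (i + 1))) :=
    Finset.sum_congr rfl (fun i _ => by ring)
  rw [h4]
  rw [Finset.sum_sub_distrib, Finset.sum_add_distrib, ← Finset.sum_div, ← Finset.sum_div, h2, h3]
  rw [Finset.sum_sub_distrib, Finset.sum_add_distrib, h1, ← Finset.mul_sum]
  ring

end sums

open Fin.NatCast in
lemma const_of_shift {n : ℕ} [NeZero n] (z : Fin n → ℝ)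
    (h : ∀ i : Fin n, z (i + 1) = z i) (i : Fin n) : z i = z 0 := by
  have key : ∀ k : ℕ, z ((k : ℕ) : Fin n) = z 0 := by
    intro k; induction k with
    | zero => simp
    | succ m ih =>
      have : ((m + 1 : ℕ) : Fin n) = ((m : ℕ) : Fin n) + 1 := by push_cast; ring
      rw [this, h, ih]
  have := key (i : ℕ); rwa [Fin.cast_val_eq_self i] at this

lemma gap {n : ℕ} [NeZero n] (hn : 3 ≤ n) :
    ∃ c > 0, ∀ x : Fin n → ℝ, ∑ i, x i = 0 →
      c * ∑ i, (x i) ^ 2 ≤ ∑ i, (x i - x (i + 1)) ^ 2 := by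
  set g : (Fin n → ℝ) → ℝ := fun x => ∑ i, (x i - x (i + 1)) ^ 2 with hgdef
  have hgc : Continuous g := by
    apply continuous_finset_sum
    exact fun i _ => ((continuous_apply i).sub (continuous_apply (i + 1))).pow 2
  have c1 : Continuous fun x : Fin n → ℝ => ∑ i, x i :=
    continuous_finset_sum _ fun i _ => continuous_apply i
  have c2 : Continuous fun x : Fin n → ℝ => ∑ i, (x i) ^ 2 :=
    continuous_finset_sum _ fun i _ => (continuous_apply i).pow 2
  set K : Set (Fin n → ℝ) := {x | (∑ i, x i) = 0 ∧ (∑ i, (x i) ^ 2) = 1} with hKdef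
  have hKc : IsClosed K :=
    (isClosed_eq c1 continuous_const).inter (isClosed_eq c2 continuous_const)
  have hKb : Bornology.IsBounded K := by
    apply Bornology.IsBounded.subset (Metric.isBounded_closedBall (x := (0 : Fin n → ℝ)) (r := 1))
    intro x hx
    rw [Metric.mem_closedBall]
    rw [dist_pi_le_iff (by norm_num)]
    intro b
    simp only [Pi.zero_apply, Real.dist_eq, sub_zero]
    have h1 : (x b) ^ 2 ≤ 1 := by
      calc (x b) ^ 2 ≤ ∑ i, (x i) ^ 2 :=
            Finset.single_le_sum (f := fun i => (x i) ^ 2)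
              (fun i _ => sq_nonneg _) (Finset.mem_univ b)
        _ = 1 := hx.2
    nlinarith [abs_nonneg (x b), sq_abs (x b)]
  have hK : IsCompact K := Metric.isCompact_of_isClosed_isBounded hKc hKb
  -- K is nonempty
  have h01 : (0 : Fin n) ≠ 1 := by
    intro h
    have := congrArg Fin.val h
    rw [Fin.val_zero, fin_one_val hn] at this
    omega
  set a : ℝ := Real.sqrt (1 / 2) with ha
  have ha2 : a ^ 2 = 1 / 2 := Real.sq_sqrt (by norm_num)
  set x₀ : Fin n → ℝ := fun i => if i = 0 then a else if i = 1 then -a else 0 with hx₀def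
  have hx₀ : x₀ ∈ K := by
    constructor
    · have key : ∀ i : Fin n, x₀ i =
          (if i = (0 : Fin n) then a else 0) + (if i = (1 : Fin n) then -a else 0) := by
        intro i
        by_cases hi0 : i = 0 <;> by_cases hi1 : i = 1 <;>
          simp_all [hx₀def]
      rw [Finset.sum_congr rfl fun i _ => key i, Finset.sum_add_distrib]
      simp [Finset.sum_ite_eq']
    · have key : ∀ i : Fin n, (x₀ i) ^ 2 =
          (if i = (0 : Fin n) then a ^ 2 else 0) + (if i = (1 : Fin n) then a ^ 2 else 0) := by
        intro i
        by_cases hi0 : i = 0 <;> by_cases hi1 : i = 1 <;>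
          simp_all [hx₀def] <;> ring
      rw [Finset.sum_congr rfl fun i _ => key i, Finset.sum_add_distrib]
      simp [Finset.sum_ite_eq', ha2]
      norm_num
  obtain ⟨z, hzK, hzmin⟩ := hK.exists_isMinOn ⟨x₀, hx₀⟩ hgc.continuousOn
  have hgz_nonneg : 0 ≤ g z := Finset.sum_nonneg fun i _ => sq_nonneg _
  have hgz : 0 < g z := by
    rcases hgz_nonneg.lt_or_eq with h | h
    · exact h
    · exfalso
      have hzero : ∀ i ∈ Finset.univ, (z i - z (i + 1)) ^ 2 = 0 := by
        rw [← Finset.sum_eq_zero_iff_of_nonneg (fun i _ => sq_nonneg _)]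
        exact h.symm
      have hshift : ∀ i : Fin n, z (i + 1) = z i := by
        intro i
        have := hzero i (Finset.mem_univ i)
        have := pow_eq_zero_iff (n := 2) (by norm_num) |>.mp this
        linarith [sub_eq_zero.mp this]
      have hconst := const_of_shift z hshift
      have hsum : ∑ i, z i = (n : ℝ) * z 0 := by
        rw [Finset.sum_congr rfl fun i _ => hconst i]
        simp [Finset.card_univ, mul_comm]
      have hz0 : z 0 = 0 := by
        have := hzK.1
        rw [hsum] at this
        have hn0 : (n : ℝ) ≠ 0 := Nat.cast_ne_zero.mpr (by omega)
        exact (mul_eq_zero.mp this).resolve_left hn0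
      have : ∑ i, (z i) ^ 2 = 0 := by
        rw [Finset.sum_congr rfl fun i _ => by rw [hconst i, hz0]]
        simp
      rw [hzK.2] at this; norm_num at this
  refine ⟨g z, hgz, ?_⟩
  intro x hx
  by_cases hxz : ∑ i, (x i) ^ 2 = 0
  · have hx0 : ∀ i ∈ Finset.univ, (x i) ^ 2 = 0 := by
      rw [← Finset.sum_eq_zero_iff_of_nonneg (fun i _ => sq_nonneg _)]; exact hxz
    have : ∀ i : Fin n, x i = 0 := fun i =>
      pow_eq_zero_iff (n := 2) (by norm_num) |>.mp (hx0 i (Finset.mem_univ i))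
    rw [hxz, mul_zero]
    exact Finset.sum_nonneg fun i _ => sq_nonneg _
  · have hs : 0 < ∑ i, (x i) ^ 2 :=
      (Finset.sum_nonneg fun i _ => sq_nonneg _).lt_of_ne (Ne.symm hxz)
    set s : ℝ := ∑ i, (x i) ^ 2 with hsdef
    set y : Fin n → ℝ := fun i => x i / Real.sqrt s with hydef
    have hsq : Real.sqrt s ^ 2 = s := Real.sq_sqrt hs.le
    have hy : y ∈ K := by
      constructor
      · show (∑ i, x i / Real.sqrt s) = 0
        rw [← Finset.sum_div, hx, zero_div]
      · show (∑ i, (x i / Real.sqrt s) ^ 2) = 1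
        simp only [div_pow, hsq]
        rw [← Finset.sum_div, ← hsdef, div_self hs.ne']
    have hmin := hzmin hy
    have hgy : g y = g x / s := by
      show (∑ i, (y i - y (i + 1)) ^ 2) = _
      have : ∀ i : Fin n, (y i - y (i + 1)) ^ 2 = (x i - x (i + 1)) ^ 2 / s := by
        intro i
        show ((x i / Real.sqrt s) - (x (i + 1) / Real.sqrt s)) ^ 2 = _
        rw [div_sub_div_same, div_pow, hsq]
      rw [Finset.sum_congr rfl fun i _ => this i, ← Finset.sum_div]
    have hmin' : g z ≤ g y := hmin
    rw [hgy] at hmin'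
    show g z * s ≤ g x
    calc g z * s ≤ (g x / s) * s := by nlinarith [hmin']
      _ = g x := div_mul_cancel₀ _ hs.ne'

lemma tendsto_zero_of_deriv_le (a : ℝ) (ha : 0 < a) (V W : ℝ → ℝ)
    (hV : ∀ t, HasDerivAt V (W t) t) (hV0 : ∀ t, 0 ≤ V t)
    (hW : ∀ t, W t ≤ -(a * V t)) :
    Filter.Tendsto V Filter.atTop (nhds 0) := by
  set g : ℝ → ℝ := fun t => V t * Real.exp (a * t) with hgdef
  have hexp : ∀ t : ℝ, HasDerivAt (fun t => Real.exp (a * t)) (a * Real.exp (a * t)) t := by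
    intro t
    have h1 : HasDerivAt (fun t : ℝ => a * t) a t := by
      simpa using (hasDerivAt_id t).const_mul a
    simpa [mul_comm] using h1.exp
  have hg : ∀ t, HasDerivAt g (W t * Real.exp (a * t) + V t * (a * Real.exp (a * t))) t :=
    fun t => (hV t).mul (hexp t)
  have hgmono : Antitone g := by
    apply antitone_of_deriv_nonpos
    · exact fun t => (hg t).differentiableAt
    · intro t
      rw [(hg t).deriv]
      have he : 0 < Real.exp (a * t) := Real.exp_pos _
      nlinarith [hW t, hV0 t]
  have h2 : g 0 = V 0 := by simp [hgdef]
  have hbound : ∀ t : ℝ, 0 ≤ t → V t ≤ V 0 * Real.exp (-(a * t)) := by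
    intro t ht
    have h1 : g t ≤ g 0 := hgmono ht
    have h3 : V t = g t * Real.exp (-(a * t)) := by
      rw [hgdef]; simp only [mul_assoc, ← Real.exp_add]; simp
    have he : 0 < Real.exp (-(a * t)) := Real.exp_pos _
    calc V t = g t * Real.exp (-(a * t)) := h3
      _ ≤ g 0 * Real.exp (-(a * t)) := by nlinarith
      _ = V 0 * Real.exp (-(a * t)) := by rw [h2]
  have htend : Filter.Tendsto (fun t => V 0 * Real.exp (-(a * t))) Filter.atTop (nhds 0) := by
    have hexp0 : Filter.Tendsto (fun t : ℝ => Real.exp (-(a * t))) Filter.atTop (nhds 0) :=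
      Real.tendsto_exp_atBot.comp
        (tendsto_neg_atTop_atBot.comp (Filter.Tendsto.const_mul_atTop ha Filter.tendsto_id))
    simpa using hexp0.const_mul (V 0)
  exact squeeze_zero' (Filter.Eventually.of_forall hV0)
    (Filter.eventually_atTop.mpr ⟨0, fun t ht => hbound t ht⟩) htend

/-- Proposition 1 (Controller 1, Desired Angular Speed): under the phase dynamics
`φ' = ω* 𝟙 + k_φ ((C - I) φ + b)`, the phase error `e_φ = (C - I) φ + b` tends to `0`
and `φ'` tends to `ω* 𝟙`. -/
theorem stmt_4 (n : ℕ) (hn : 3 ≤ n) (ωs kφ : ℝ) (hkφ : 0 < kφ)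
    (φ : ℝ → Fin n → ℝ)
    (hφ : ∀ t, HasDerivAt φ
      (ωs • (fun _ => (1 : ℝ)) + kφ • ((ringC n - 1) *ᵥ φ t + vecB n)) t) :
    Filter.Tendsto (fun t => (ringC n - 1) *ᵥ φ t + vecB n) Filter.atTop (nhds 0) ∧
    Filter.Tendsto (fun t => deriv φ t) Filter.atTop (nhds (ωs • fun _ => (1 : ℝ))) := by
  haveI : NeZero n := ⟨by omega⟩
  set e : ℝ → Fin n → ℝ := fun t => (ringC n - 1) *ᵥ φ t + vecB n with hedef
  have hφc : ∀ t i, HasDerivAt (fun τ => φ τ i) (ωs * 1 + kφ * e t i) t := by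
    intro t i
    have := hasDerivAt_pi.mp (hφ t) i
    simpa [hedef, smul_eq_mul, mul_add] using this
  -- derivative of each component of e
  have he : ∀ t i, HasDerivAt (fun τ => e τ i) (kφ * ((ringC n - 1) *ᵥ e t) i) t := by
    intro t i
    have hform : (fun τ => e τ i)
        = fun τ => (∑ j, (ringC n - 1) i j * φ τ j) + vecB n i := by
      funext τ
      show ((ringC n - 1) *ᵥ φ τ) i + vecB n i = _
      rfl
    have h1 : HasDerivAt (fun τ => e τ i)
        (∑ j, (ringC n - 1) i j * (ωs * 1 + kφ * e t j)) t := by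
      rw [hform]
      exact HasDerivAt.add_const _
        (HasDerivAt.fun_sum (fun j _ => (hφc t j).const_mul ((ringC n - 1) i j)))
    convert h1 using 1
    have hrow : ∑ j, (ringC n - 1) i j * (1 : ℝ) = 0 := by
      have := congrFun (ringC_mulVec_one hn) i
      simpa [Matrix.mulVec, dotProduct] using this
    have hterm : ∀ j, (ringC n - 1) i j * (ωs * 1 + kφ * e t j)
        = ωs * ((ringC n - 1) i j * 1) + kφ * ((ringC n - 1) i j * e t j) := by
      intro j; ring
    rw [Finset.sum_congr rfl fun j _ => hterm j, Finset.sum_add_distrib,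
      ← Finset.mul_sum, ← Finset.mul_sum, hrow, mul_zero, zero_add]
    rfl
  -- Lyapunov function
  set V : ℝ → ℝ := fun t => ∑ i, (e t i) ^ 2 with hVdef
  set W : ℝ → ℝ := fun t => ∑ i, (2 : ℕ) * (e t i) ^ 1 * (kφ * ((ringC n - 1) *ᵥ e t) i)
    with hWdef
  have hVd : ∀ t, HasDerivAt V (W t) t :=
    fun t => HasDerivAt.fun_sum fun i _ => (he t i).fun_pow 2
  have hV0 : ∀ t, 0 ≤ V t := fun t => Finset.sum_nonneg fun i _ => sq_nonneg _
  obtain ⟨c, hc, hgap⟩ := gap (n := n) hn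
  have hsum0 : ∀ t, ∑ i, e t i = 0 := by
    intro t
    have := sum_err hn (φ t)
    simpa [hedef] using this
  have hWle : ∀ t, W t ≤ -((kφ * c) * V t) := by
    intro t
    have hq := quad_eq hn (e t)
    have hg := hgap (e t) (hsum0 t)
    have hW' : W t = 2 * kφ * ∑ i, e t i * ((ringC n - 1) *ᵥ e t) i := by
      rw [hWdef, Finset.mul_sum]
      exact Finset.sum_congr rfl fun i _ => by push_cast; ring
    rw [hW', hq]
    have : 2 * kφ * (-(1/2) * ∑ i, (e t i - e t (i + 1)) ^ 2) = -(kφ * ∑ i, (e t i - e t (i + 1)) ^ 2) := by ring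
    rw [this]
    have : (kφ * c) * V t = kφ * (c * V t) := by ring
    rw [this]
    have h5 : c * V t ≤ ∑ i, (e t i - e t (i + 1)) ^ 2 := hg
    nlinarith
  have hVtend : Filter.Tendsto V Filter.atTop (nhds 0) :=
    tendsto_zero_of_deriv_le (kφ * c) (by positivity) V W hVd hV0 hWle
  have hsqrt : Filter.Tendsto (fun t => Real.sqrt (V t)) Filter.atTop (nhds 0) := by
    have := (Real.continuous_sqrt.tendsto 0).comp hVtend
    simpa [Function.comp_def] using this
  have hcomp : ∀ i, Filter.Tendsto (fun t => e t i) Filter.atTop (nhds 0) := by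
    intro i
    have habs : ∀ t, |e t i| ≤ Real.sqrt (V t) := by
      intro t
      rw [← Real.sqrt_sq_eq_abs]
      apply Real.sqrt_le_sqrt
      exact Finset.single_le_sum (f := fun j => (e t j) ^ 2)
        (fun j _ => sq_nonneg _) (Finset.mem_univ i)
    apply tendsto_of_tendsto_of_tendsto_of_le_of_le (g := fun t => -Real.sqrt (V t))
      (h := fun t => Real.sqrt (V t))
    · simpa using hsqrt.neg
    · exact hsqrt
    · intro t; have := habs t; rw [abs_le] at this; exact this.1
    · intro t; have := habs t; rw [abs_le] at this; exact this.2
  have hetend : Filter.Tendsto e Filter.atTop (nhds 0) := by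
    rw [tendsto_pi_nhds]
    intro i
    simpa using hcomp i
  refine ⟨hetend, ?_⟩
  have hderiv : ∀ t, deriv φ t = ωs • (fun _ => (1 : ℝ)) + kφ • e t :=
    fun t => (hφ t).deriv
  have : Filter.Tendsto (fun t => ωs • (fun _ => (1 : ℝ)) + kφ • e t) Filter.atTop
      (nhds (ωs • fun _ => (1 : ℝ))) := by
    have h1 : Filter.Tendsto (fun t => kφ • e t) Filter.atTop (nhds 0) := by
      simpa using (hetend.const_smul kφ)
    have h0 : Filter.Tendsto (fun _ : ℝ => ωs • (fun _ : Fin n => (1 : ℝ)))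
        Filter.atTop (nhds (ωs • fun _ : Fin n => (1 : ℝ))) := tendsto_const_nhds
    simpa using h0.add h1
  simp only [hderiv]
  exact this
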